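/- Let Δ(z) be a homogeneous polynomial of degree s on ℂ^N with partials Δ_1, ..., Δ_N, and let t ≥ 0. For every homogeneous polynomial P(z) of degree (t+1)s there exists a decomposition P(z) = L(z) + C(z) with L(z) = (Δ_1(z)A_1(z) + ... + Δ_N(z)A_N(z))·Δ(z)^t for some linear forms A_1, ..., A_N, and (Δ_k Δ^t)*(C) = 0 for all k = 1, ..., N; moreover L and C are uniquely determined. -/

import Mathlib

open MvPolynomial

/-- The iterated partial derivative `∂^d = ∏_i (∂/∂z_i)^{d i}` as a linear
endomorphism of `ℂ[z_1,...,z_N]`. -/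
noncomputable def pderivPow {N : ℕ} (d : Fin N →₀ ℕ) :
    Module.End ℂ (MvPolynomial (Fin N) ℂ) :=
  ((Finsupp.toMultiset d).toList.map fun i => ((pderiv (R := ℂ) i).toLinearMap : Module.End ℂ (MvPolynomial (Fin N) ℂ))).prod

/-- The Fisher differential operator `V*` of `V(z) = Σ_I b_I z^I`, applied to `P`:
`V* P = Σ_I b̄_I ∂^I P`. -/
noncomputable def fisher {N : ℕ} (V P : MvPolynomial (Fin N) ℂ) :
    MvPolynomial (Fin N) ℂ :=
  ∑ d ∈ V.support, (starRingEnd ℂ) (V.coeff d) • pderivPow d P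

namespace FisherAux

variable {N : ℕ}

abbrev MvP (N : ℕ) := MvPolynomial (Fin N) ℂ

noncomputable def pd (i : Fin N) : Module.End ℂ (MvP N) := (pderiv (R := ℂ) i).toLinearMap

lemma pderiv_comm' (i j : Fin N) (f : MvP N) :
    pderiv i (pderiv j f) = pderiv j (pderiv i f) := by
  rcases eq_or_ne i j with rfl | hij
  · rfl
  induction f using MvPolynomial.induction_on' with
  | monomial s a =>
    simp only [pderiv_monomial]
    rw [Finsupp.tsub_apply, Finsupp.tsub_apply,
      Finsupp.single_apply, Finsupp.single_apply]
    simp only [if_neg hij, if_neg (Ne.symm hij), Nat.sub_zero]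
    rw [tsub_tsub, tsub_tsub, add_comm (Finsupp.single j 1)]
    ring_nf
  | add p q hp hq => simp [map_add, hp, hq]

lemma commute_pd (i j : Fin N) : Commute (pd i) (pd j) :=
  LinearMap.ext fun f => pderiv_comm' i j f

lemma pairwise_commute (l : List (Fin N)) : (l.map pd).Pairwise Commute := by
  induction l with
  | nil => simp
  | cons a l ih =>
    simp only [List.map_cons, List.pairwise_cons]
    exact ⟨by rintro x hx; obtain ⟨j, -, rfl⟩ := List.mem_map.1 hx; exact commute_pd a j, ih⟩

noncomputable def mp (m : Multiset (Fin N)) : Module.End ℂ (MvP N) :=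
  (m.toList.map pd).prod

lemma pderivPow_eq_mp (d : Fin N →₀ ℕ) : pderivPow d = mp (Finsupp.toMultiset d) := rfl

lemma mp_coe (l : List (Fin N)) : mp (↑l) = (l.map pd).prod := by
  have hperm : List.Perm (Multiset.toList (↑l : Multiset (Fin N))) l := by
    rw [← Multiset.coe_eq_coe, Multiset.coe_toList]
  exact (hperm.map pd).prod_eq' (pairwise_commute _)

lemma mp_zero : mp (0 : Multiset (Fin N)) = 1 := by
  have : ((0 : Multiset (Fin N))) = (↑([] : List (Fin N)) : Multiset (Fin N)) := rfl
  rw [this, mp_coe]; simp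

lemma mp_add (a b : Multiset (Fin N)) : mp (a + b) = mp a * mp b := by
  have h1 : a + b = (↑(a.toList ++ b.toList) : Multiset (Fin N)) := by
    rw [← Multiset.coe_add, Multiset.coe_toList, Multiset.coe_toList]
  rw [h1, mp_coe, List.map_append, List.prod_append, mp, mp]

lemma mp_singleton (i : Fin N) : mp ({i} : Multiset (Fin N)) = pd i := by
  have : ({i} : Multiset (Fin N)) = (↑([i] : List (Fin N)) : Multiset (Fin N)) := rfl
  rw [this, mp_coe]; simp

lemma pderivPow_zero : pderivPow (0 : Fin N →₀ ℕ) = 1 := by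
  rw [pderivPow_eq_mp]; simp [mp_zero]

lemma pderivPow_add (d e : Fin N →₀ ℕ) :
    pderivPow (d + e) = pderivPow d * pderivPow e := by
  rw [pderivPow_eq_mp, pderivPow_eq_mp, pderivPow_eq_mp, Finsupp.toMultiset_add, mp_add]

lemma pderivPow_single (i : Fin N) :
    pderivPow (Finsupp.single i 1) = pd i := by
  rw [pderivPow_eq_mp, Finsupp.toMultiset_single]
  simp [mp_singleton]

lemma finsupp_induction_one {M : (Fin N →₀ ℕ) → Prop} (h0 : M 0)
    (hstep : ∀ (i : Fin N) (d : Fin N →₀ ℕ), M d → M (Finsupp.single i 1 + d)) :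
    ∀ d, M d := by
  classical
  intro d
  have key : ∀ m : Multiset (Fin N), M (Multiset.toFinsupp m) := by
    intro m
    induction m using Multiset.induction with
    | empty => simpa [Multiset.toFinsupp_zero] using h0
    | cons a s ih =>
      have h : Multiset.toFinsupp (a ::ₘ s) = Finsupp.single a 1 + Multiset.toFinsupp s := by
        rw [← Multiset.singleton_add, Multiset.toFinsupp_add, Multiset.toFinsupp_singleton]
      rw [h]; exact hstep _ _ ih
  simpa using key (Finsupp.toMultiset d)


lemma coeff_pderiv (i : Fin N) (d : Fin N →₀ ℕ) (P : MvP N) :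
    coeff d (pderiv i P) = (d i + 1 : ℂ) * coeff (d + Finsupp.single i 1) P := by
  classical
  induction P using MvPolynomial.induction_on' with
  | add p q hp hq => simp [map_add, hp, hq]; ring
  | monomial s a =>
    by_cases hs : s = d + Finsupp.single i 1
    · subst hs
      have h1 : d + (Finsupp.single i 1 : Fin N →₀ ℕ) - Finsupp.single i 1 = d := by
        ext j
        simp only [Finsupp.coe_tsub, Pi.sub_apply, Finsupp.coe_add, Pi.add_apply]
        omega
      have h2 : (d + (Finsupp.single i 1 : Fin N →₀ ℕ)) i = d i + 1 := by
        simp [Finsupp.add_apply, Finsupp.single_eq_same]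
      simp only [pderiv_monomial, h1, h2, coeff_monomial, if_pos rfl]
      push_cast
      ring
    · rw [pderiv_monomial, coeff_monomial, coeff_monomial, if_neg hs, mul_zero]
      by_cases h2 : s - Finsupp.single i 1 = d
      · rw [if_pos h2]
        by_cases h3 : s i = 0
        · simp [h3]
        · exfalso
          apply hs
          subst h2
          ext j
          simp only [Finsupp.coe_add, Pi.add_apply, Finsupp.tsub_apply]
          by_cases hj : i = j
          · subst hj; rw [Finsupp.single_eq_same]; omega
          · rw [Finsupp.single_eq_of_ne (Ne.symm hj)]; omega
      · rw [if_neg h2]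


def fact (d : Fin N →₀ ℕ) : ℕ := ∏ i, (d i).factorial

lemma fact_zero : fact (0 : Fin N →₀ ℕ) = 1 := by simp [fact]

lemma fact_pos (d : Fin N →₀ ℕ) : 0 < fact d :=
  Finset.prod_pos fun i _ => Nat.factorial_pos _

lemma fact_single_add (i : Fin N) (d : Fin N →₀ ℕ) :
    fact (Finsupp.single i 1 + d) = (d i + 1) * fact d := by
  classical
  unfold fact
  rw [Finset.prod_eq_mul_prod_sdiff_singleton_of_mem (Finset.mem_univ i),
    Finset.prod_eq_mul_prod_sdiff_singleton_of_mem (Finset.mem_univ i) (fun j => (d j).factorial)]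
  have h1 : ((Finsupp.single i 1 + d : Fin N →₀ ℕ) i).factorial = (d i + 1) * (d i).factorial := by
    rw [Finsupp.add_apply, Finsupp.single_eq_same, add_comm 1 (d i), Nat.factorial_succ]
  have h2 : ∀ j ∈ Finset.univ \ {i}, ((Finsupp.single i 1 + d : Fin N →₀ ℕ) j).factorial = (d j).factorial := by
    intro j hj
    rw [Finset.mem_sdiff, Finset.mem_singleton] at hj
    rw [Finsupp.add_apply, Finsupp.single_eq_of_ne hj.2, zero_add]
  rw [h1, Finset.prod_congr rfl h2, mul_assoc]

lemma fact_single (i : Fin N) : fact (Finsupp.single i 1) = 1 := by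
  have := fact_single_add i (0 : Fin N →₀ ℕ)
  simpa [fact_zero] using this

lemma degree_single_one_add (i : Fin N) (d : Fin N →₀ ℕ) :
    (Finsupp.single i 1 + d).degree = d.degree + 1 := by
  rw [Finsupp.degree_eq_weight_one, map_add]
  have : (Finsupp.weight 1) (Finsupp.single i 1) = 1 := by
    simp [Finsupp.weight_apply, Finsupp.sum_single_index]
  erw [this]; ring

lemma isHomogeneous_iff_degree {φ : MvPolynomial (Fin N) ℂ} {n : ℕ} :
    φ.IsHomogeneous n ↔ ∀ d, coeff d φ ≠ 0 → d.degree = n := by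
  unfold MvPolynomial.IsHomogeneous MvPolynomial.IsWeightedHomogeneous
  simp_rw [Finsupp.degree_eq_weight_one]
  exact Iff.rfl

lemma isHomogeneous_pderiv {φ : MvP N} {n : ℕ} (h : φ.IsHomogeneous n)
    (i : Fin N) : (pderiv i φ).IsHomogeneous (n - 1) := by
  rw [isHomogeneous_iff_degree] at h ⊢
  intro d hd
  rw [coeff_pderiv] at hd
  have h2 : coeff (d + Finsupp.single i 1) φ ≠ 0 := by
    intro h0; rw [h0, mul_zero] at hd; exact hd rfl
  have h3 := h _ h2
  rw [add_comm, degree_single_one_add] at h3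
  omega

lemma isHomogeneous_pderivPow {n : ℕ} :
    ∀ (d : Fin N →₀ ℕ) (φ : MvP N), φ.IsHomogeneous n →
      (pderivPow d φ).IsHomogeneous (n - d.degree) := by
  apply finsupp_induction_one (M := fun d => ∀ (φ : MvP N), φ.IsHomogeneous n →
      (pderivPow d φ).IsHomogeneous (n - d.degree))
  · intro φ h
    rw [pderivPow_zero]
    simpa using h
  · intro i d ih φ h
    have hrw : pderivPow (Finsupp.single i 1 + d) φ = pderiv i (pderivPow d φ) := by
      rw [pderivPow_add, pderivPow_single]
      rfl
    rw [hrw, degree_single_one_add]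
    have := isHomogeneous_pderiv (ih φ h) i
    convert this using 1
    omega

lemma constantCoeff_pderivPow :
    ∀ (d : Fin N →₀ ℕ) (φ : MvP N),
      constantCoeff (pderivPow d φ) = (fact d : ℂ) * coeff d φ := by
  apply finsupp_induction_one (M := fun d => ∀ (φ : MvP N),
      constantCoeff (pderivPow d φ) = (fact d : ℂ) * coeff d φ)
  · intro φ
    rw [pderivPow_zero, fact_zero]
    simp [constantCoeff_eq]
  · intro i d ih φ
    have hrw : pderivPow (Finsupp.single i 1 + d) φ = pderivPow d (pderiv i φ) := by
      rw [add_comm, pderivPow_add, pderivPow_single]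
      rfl
    rw [hrw, ih, coeff_pderiv, fact_single_add, add_comm d (Finsupp.single i 1)]
    push_cast
    ring

lemma fisher_def (V P : MvP N) :
    fisher V P = ∑ d ∈ V.support, (starRingEnd ℂ) (V.coeff d) • pderivPow d P := rfl

lemma fisher_eq_sum_of_subset (V P : MvP N) (S : Finset (Fin N →₀ ℕ))
    (hS : V.support ⊆ S) :
    fisher V P = ∑ d ∈ S, (starRingEnd ℂ) (V.coeff d) • pderivPow d P := by
  rw [fisher_def]
  refine Finset.sum_subset hS (fun d _ hd => ?_)
  rw [MvPolynomial.notMem_support_iff] at hd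
  rw [hd, map_zero, zero_smul]

lemma fisher_zero_left (P : MvP N) : fisher 0 P = 0 := by
  rw [fisher_def]; simp

lemma fisher_add_left (V W P : MvP N) :
    fisher (V + W) P = fisher V P + fisher W P := by
  classical
  rw [fisher_eq_sum_of_subset (V + W) P (V.support ∪ W.support)
      (MvPolynomial.support_add ..),
    fisher_eq_sum_of_subset V P (V.support ∪ W.support) Finset.subset_union_left,
    fisher_eq_sum_of_subset W P (V.support ∪ W.support) Finset.subset_union_right,
    ← Finset.sum_add_distrib]
  refine Finset.sum_congr rfl fun d _ => ?_
  rw [MvPolynomial.coeff_add, map_add, add_smul]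

lemma fisher_smul_left (a : ℂ) (V P : MvP N) :
    fisher (a • V) P = (starRingEnd ℂ) a • fisher V P := by
  classical
  rw [fisher_eq_sum_of_subset (a • V) P V.support (MvPolynomial.support_smul),
    fisher_def, Finset.smul_sum]
  refine Finset.sum_congr rfl fun d _ => ?_
  rw [MvPolynomial.coeff_smul, smul_eq_mul, map_mul, mul_smul]

lemma fisher_add_right (V P Q : MvP N) :
    fisher V (P + Q) = fisher V P + fisher V Q := by
  rw [fisher_def, fisher_def, fisher_def, ← Finset.sum_add_distrib]
  refine Finset.sum_congr rfl fun d _ => ?_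
  rw [map_add, smul_add]

lemma fisher_smul_right (a : ℂ) (V P : MvP N) :
    fisher V (a • P) = a • fisher V P := by
  rw [fisher_def, fisher_def, Finset.smul_sum]
  refine Finset.sum_congr rfl fun d _ => ?_
  rw [map_smul, smul_comm]

lemma fisher_monomial (d : Fin N →₀ ℕ) (a : ℂ) (P : MvP N) :
    fisher (monomial d a) P = (starRingEnd ℂ) a • pderivPow d P := by
  classical
  by_cases ha : a = 0
  · subst ha
    simp [fisher_zero_left]
  · rw [fisher_def, MvPolynomial.support_monomial, if_neg ha, Finset.sum_singleton,
      MvPolynomial.coeff_monomial, if_pos rfl]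

lemma fisher_mul (V W P : MvP N) :
    fisher (V * W) P = fisher V (fisher W P) := by
  classical
  induction V using MvPolynomial.induction_on' with
  | add p q hp hq => rw [add_mul, fisher_add_left, hp, hq, fisher_add_left]
  | monomial dV aV =>
    induction W using MvPolynomial.induction_on' with
    | add p q hp hq =>
      rw [mul_add, fisher_add_left, hp, hq, fisher_add_left, fisher_add_right]
    | monomial dW aW =>
      rw [MvPolynomial.monomial_mul, fisher_monomial, fisher_monomial, fisher_monomial,
        map_smul, pderivPow_add, map_mul, smul_smul]
      rfl

lemma fisher_isHomogeneous {V P : MvP N} {a b : ℕ} (hV : V.IsHomogeneous a)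
    (hP : P.IsHomogeneous b) : (fisher V P).IsHomogeneous (b - a) := by
  rw [fisher_def]
  apply MvPolynomial.IsHomogeneous.sum
  intro d hd
  have hdeg : d.degree = a := by
    rw [isHomogeneous_iff_degree] at hV
    exact hV d (MvPolynomial.mem_support_iff.mp hd)
  have h1 : (pderivPow d P).IsHomogeneous (b - a) := by
    rw [← hdeg]
    exact isHomogeneous_pderivPow d P hP
  rw [MvPolynomial.smul_eq_C_mul]
  exact h1.C_mul _

noncomputable def innerF (P Q : MvP N) : ℂ := constantCoeff (fisher P Q)

lemma innerF_eq_sum (P Q : MvP N) (S : Finset (Fin N →₀ ℕ)) (hS : P.support ⊆ S) :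
    innerF P Q = ∑ d ∈ S, (fact d : ℂ) * (starRingEnd ℂ) (coeff d P) * coeff d Q := by
  rw [innerF, fisher_eq_sum_of_subset P Q S hS, map_sum]
  refine Finset.sum_congr rfl fun d _ => ?_
  rw [MvPolynomial.smul_eq_C_mul, map_mul, constantCoeff_C, constantCoeff_pderivPow]
  ring

lemma innerF_conj_symm (P Q : MvP N) :
    (starRingEnd ℂ) (innerF Q P) = innerF P Q := by
  classical
  rw [innerF_eq_sum Q P (P.support ∪ Q.support) Finset.subset_union_right,
    innerF_eq_sum P Q (P.support ∪ Q.support) Finset.subset_union_left, map_sum]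
  refine Finset.sum_congr rfl fun d _ => ?_
  rw [map_mul, map_mul, RingHomCompTriple.comp_apply, RingHom.id_apply]
  rw [Complex.conj_natCast]
  ring

lemma innerF_add_right (P Q R : MvP N) :
    innerF P (Q + R) = innerF P Q + innerF P R := by
  rw [innerF, innerF, innerF, fisher_add_right, map_add]

lemma innerF_smul_right (a : ℂ) (P Q : MvP N) :
    innerF P (a • Q) = a * innerF P Q := by
  rw [innerF, innerF, fisher_smul_right, MvPolynomial.smul_eq_C_mul, map_mul, constantCoeff_C]

lemma innerF_self_eq (P : MvP N) :
    innerF P P = ((∑ d ∈ P.support, (fact d : ℝ) * Complex.normSq (coeff d P) : ℝ) : ℂ) := by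
  rw [innerF_eq_sum P P P.support subset_rfl, Complex.ofReal_sum]
  refine Finset.sum_congr rfl fun d _ => ?_
  rw [mul_assoc, mul_comm ((starRingEnd ℂ) (coeff d P)), Complex.mul_conj]
  push_cast
  ring

noncomputable def core : InnerProductSpace.Core ℂ (MvP N) where
  inner := innerF
  conj_inner_symm := fun x y => by
    show (starRingEnd ℂ) (innerF y x) = innerF x y
    exact innerF_conj_symm x y
  re_inner_nonneg := by
    intro x
    show 0 ≤ RCLike.re (innerF x x)
    rw [innerF_self_eq]
    simp only [RCLike.re_to_complex, Complex.ofReal_re]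
    exact Finset.sum_nonneg fun d _ =>
      mul_nonneg (Nat.cast_nonneg _) (Complex.normSq_nonneg _)
  add_left := by
    intro x y z
    show innerF (x + y) z = innerF x z + innerF y z
    have h1 : innerF z (x + y) = innerF z x + innerF z y := innerF_add_right z x y
    have := congrArg (starRingEnd ℂ) h1
    rw [map_add, innerF_conj_symm, innerF_conj_symm, innerF_conj_symm] at this
    exact this
  smul_left := by
    intro x y r
    show innerF (r • x) y = (starRingEnd ℂ) r * innerF x y
    have h1 : innerF y (r • x) = r * innerF y x := innerF_smul_right r y x
    have := congrArg (starRingEnd ℂ) h1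
    rw [map_mul, innerF_conj_symm, innerF_conj_symm] at this
    exact this
  definite := by
    intro x hx
    replace hx : innerF x x = 0 := hx
    rw [innerF_self_eq] at hx
    have h0 : (∑ d ∈ x.support, (fact d : ℝ) * Complex.normSq (coeff d x)) = 0 := by
      exact_mod_cast hx
    have hterm : ∀ d ∈ x.support, (fact d : ℝ) * Complex.normSq (coeff d x) = 0 :=
      (Finset.sum_eq_zero_iff_of_nonneg fun d _ =>
        mul_nonneg (Nat.cast_nonneg _) (Complex.normSq_nonneg _)).mp h0
    ext d
    by_cases hd : d ∈ x.support
    · have := hterm d hd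
      have hf : (fact d : ℝ) ≠ 0 := Nat.cast_ne_zero.mpr (fact_pos d).ne'
      have : Complex.normSq (coeff d x) = 0 := by
        rcases mul_eq_zero.mp this with h | h
        · exact absurd h hf
        · exact h
      simpa using Complex.normSq_eq_zero.mp this
    · rw [MvPolynomial.notMem_support_iff] at hd
      simp [hd]

lemma degree_single (i : Fin N) : (Finsupp.single i 1 : Fin N →₀ ℕ).degree = 1 := by
  have := degree_single_one_add i (0 : Fin N →₀ ℕ)
  simpa using this

lemma exists_single_of_degree_one {m : Fin N →₀ ℕ} (h : m.degree = 1) :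
    ∃ i, m = Finsupp.single i 1 := by
  classical
  have hcard : Multiset.card (Finsupp.toMultiset m) = 1 := by
    rw [Finsupp.card_toMultiset]
    exact h
  obtain ⟨a, ha⟩ := Multiset.card_eq_one.mp hcard
  refine ⟨a, ?_⟩
  rw [Finsupp.toMultiset_eq_iff] at ha
  rw [ha, Multiset.toFinsupp_singleton]

lemma eq_zero_of_degree_one {D : MvP N} (hD : D.IsHomogeneous 1)
    (h : ∀ i, coeff (Finsupp.single i 1) D = 0) : D = 0 := by
  ext m
  rw [MvPolynomial.coeff_zero]
  by_contra hm
  obtain ⟨i, rfl⟩ := exists_single_of_degree_one (isHomogeneous_iff_degree.mp hD m hm)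
  exact hm (h i)

lemma repr_degree_one (A : MvP N) (hA : A.IsHomogeneous 1) :
    A = ∑ i, MvPolynomial.C (coeff (Finsupp.single i 1) A) * X i := by
  classical
  ext m
  rw [MvPolynomial.coeff_sum]
  by_cases hm : m.degree = 1
  · obtain ⟨i₀, rfl⟩ := exists_single_of_degree_one hm
    rw [Finset.sum_eq_single i₀]
    · rw [MvPolynomial.coeff_C_mul, MvPolynomial.coeff_X', if_pos rfl, mul_one]
    · intro j _ hj
      rw [MvPolynomial.coeff_C_mul, MvPolynomial.coeff_X',
        if_neg (fun hEq => hj ((Finsupp.single_left_inj one_ne_zero).mp hEq)), mul_zero]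
    · intro hi; exact absurd (Finset.mem_univ i₀) hi
  · have h1 : coeff m A = 0 := by
      by_contra hc
      exact hm (isHomogeneous_iff_degree.mp hA m hc)
    rw [h1]
    symm
    refine Finset.sum_eq_zero fun j _ => ?_
    rw [MvPolynomial.coeff_C_mul, MvPolynomial.coeff_X', if_neg, mul_zero]
    intro hEq
    rw [← hEq, degree_single] at hm
    exact hm rfl

lemma innerF_mul_left (V W C : MvP N) :
    innerF (V * W) C = innerF W (fisher V C) := by
  rw [innerF, innerF, mul_comm, fisher_mul]

lemma innerF_X_left (i : Fin N) (D : MvP N) :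
    innerF (X i) D = coeff (Finsupp.single i 1) D := by
  have hX : (X i : MvP N) = monomial (Finsupp.single i 1) 1 := rfl
  rw [innerF, hX, fisher_monomial, map_one, one_smul, constantCoeff_pderivPow, fact_single]
  simp

end FisherAux

open FisherAux

set_option maxHeartbeats 1000000
set_option synthInstance.maxHeartbeats 400000

/-- Lemma 2.4 (generalized Fisher decomposition): for `Δ` homogeneous of degree `s`
with partials `Δ_k`, every homogeneous polynomial `P` of degree `(t+1)s` decomposes
as `P = L + C` with `L = (Σ_k A_k Δ_k)·Δ^t` for linear forms `A_k` and
`(Δ_k Δ^t)* C = 0` for all `k`; moreover `L` and `C` are uniquely determined. -/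
theorem stmt_6 {N : ℕ} (s t : ℕ) (Δ : MvPolynomial (Fin N) ℂ) (hΔh : Δ.IsHomogeneous s)
    (P : MvPolynomial (Fin N) ℂ) (hP : P.IsHomogeneous ((t + 1) * s)) :
    ∃! LC : MvPolynomial (Fin N) ℂ × MvPolynomial (Fin N) ℂ,
      (∃ A : Fin N → MvPolynomial (Fin N) ℂ, (∀ j, (A j).IsHomogeneous 1) ∧
        LC.1 = (∑ j, A j * pderiv j Δ) * Δ ^ t) ∧
      P = LC.1 + LC.2 ∧
      ∀ j, fisher (pderiv j Δ * Δ ^ t) LC.2 = 0 := by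
  classical
  rcases Nat.eq_zero_or_pos s with hs0 | hs
  · -- degenerate case s = 0 : all partials vanish
    subst hs0
    have hΔC : ∀ j, pderiv j Δ = 0 := by
      intro j
      ext d
      rw [FisherAux.coeff_pderiv, MvPolynomial.coeff_zero]
      have h0 : coeff (d + Finsupp.single j 1) Δ = 0 := by
        by_contra hc
        have := isHomogeneous_iff_degree.mp hΔh _ hc
        rw [add_comm, degree_single_one_add] at this
        omega
      rw [h0, mul_zero]
    refine ⟨(0, P), ⟨⟨fun _ => 0, fun _ => MvPolynomial.isHomogeneous_zero _ _ _, by simp⟩,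
      (zero_add P).symm, fun j => by rw [hΔC j, zero_mul, fisher_zero_left]⟩, ?_⟩
    rintro ⟨L', C'⟩ ⟨⟨A', hA'h, hA'⟩, hP', hfish'⟩
    dsimp only at hA' hP' hfish'
    have hL0 : L' = 0 := by
      rw [hA']
      simp [hΔC]
    have hC0 : C' = P := by
      rw [hP', hL0, zero_add]
    rw [hL0, hC0]
  · -- main case s ≥ 1
    letI core' : InnerProductSpace.Core ℂ (MvP N) := FisherAux.core
    letI : NormedAddCommGroup (MvP N) := core'.toNormedAddCommGroup
    letI : UniformSpace (MvP N) := PseudoMetricSpace.toUniformSpace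
    letI : TopologicalSpace (MvP N) := UniformSpace.toTopologicalSpace
    letI : InnerProductSpace ℂ (MvP N) := InnerProductSpace.ofCore core'.toCore
    have hinner : ∀ x y : MvP N, inner ℂ x y = innerF x y := fun x y => rfl
    set g : Fin N → Fin N → MvP N := fun k i => X i * (pderiv k Δ * Δ ^ t) with hg
    have hB_hom : ∀ k, (pderiv k Δ * Δ ^ t).IsHomogeneous ((s - 1) + s * t) :=
      fun k => (isHomogeneous_pderiv hΔh k).mul (hΔh.pow t)
    have hg_hom : ∀ k i, (g k i).IsHomogeneous ((t + 1) * s) := by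
      intro k i
      have h1 := (MvPolynomial.isHomogeneous_X ℂ i).mul (hB_hom k)
      have h2 : 1 + ((s - 1) + s * t) = (t + 1) * s := by
        have : 1 ≤ s := hs
        cases s with
        | zero => omega
        | succ m => ring_nf; omega
      rwa [h2] at h1
    let Φ : (Fin N → Fin N → ℂ) →ₗ[ℂ] MvP N :=
      { toFun := fun c => ∑ k, ∑ i, c k i • g k i
        map_add' := by
          intro a b
          simp [add_smul, Finset.sum_add_distrib]
        map_smul' := by
          intro r a
          simp [Finset.smul_sum, smul_smul] }
    set K : Submodule ℂ (MvP N) := LinearMap.range Φ with hK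
    haveI : FiniteDimensional ℂ K := LinearMap.finiteDimensional_range Φ
    haveI : CompleteSpace K := FiniteDimensional.complete ℂ K
    have hgK : ∀ k i, g k i ∈ K := by
      intro k i
      refine ⟨(fun k' i' => if k' = k ∧ i' = i then (1 : ℂ) else 0), ?_⟩
      show (∑ k', ∑ i', (if k' = k ∧ i' = i then (1 : ℂ) else 0) • g k' i') = g k i
      rw [Finset.sum_eq_single k]
      · rw [Finset.sum_eq_single i]
        · simp
        · intro j _ hj
          rw [if_neg (fun hc => hj hc.2), zero_smul]
        · intro h; exact absurd (Finset.mem_univ i) h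
      · intro k' _ hk'
        refine Finset.sum_eq_zero fun i' _ => ?_
        rw [if_neg (fun hc => hk' hc.1), zero_smul]
      · intro h; exact absurd (Finset.mem_univ k) h
    have hK_hom : ∀ x ∈ K, x.IsHomogeneous ((t + 1) * s) := by
      rintro x ⟨c, rfl⟩
      show ((∑ k, ∑ i, c k i • g k i : MvP N)).IsHomogeneous ((t + 1) * s)
      have : (∑ k, ∑ i, c k i • g k i : MvP N) ∈
          MvPolynomial.homogeneousSubmodule (Fin N) ℂ ((t + 1) * s) := by
        refine Submodule.sum_mem _ fun k _ => Submodule.sum_mem _ fun i _ => ?_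
        exact Submodule.smul_mem _ _ ((MvPolynomial.mem_homogeneousSubmodule _ _).mpr
          (hg_hom k i))
      exact (MvPolynomial.mem_homogeneousSubmodule _ _).mp this
    have hinner_gen : ∀ (k i : Fin N) (Cq : MvP N),
        innerF (g k i) Cq = coeff (Finsupp.single i 1) (fisher (pderiv k Δ * Δ ^ t) Cq) := by
      intro k i Cq
      have hgc : g k i = (pderiv k Δ * Δ ^ t) * X i := mul_comm _ _
      rw [hgc, innerF_mul_left, innerF_X_left]
    have memKperp : ∀ Cq : MvP N, Cq.IsHomogeneous ((t + 1) * s) →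
        (Cq ∈ Kᗮ ↔ ∀ k, fisher (pderiv k Δ * Δ ^ t) Cq = 0) := by
      intro Cq hCq
      constructor
      · intro h k
        have hD : (fisher (pderiv k Δ * Δ ^ t) Cq).IsHomogeneous 1 := by
          have h1 := fisher_isHomogeneous (hB_hom k) hCq
          have h2 : (t + 1) * s - ((s - 1) + s * t) = 1 := by
            have : 1 ≤ s := hs
            cases s with
            | zero => omega
            | succ m => ring_nf; omega
          rwa [h2] at h1
        refine eq_zero_of_degree_one hD fun i => ?_
        rw [← hinner_gen k i Cq, ← hinner]
        exact (Submodule.mem_orthogonal K Cq).mp h (g k i) (hgK k i)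
      · intro h
        rw [Submodule.mem_orthogonal]
        rintro u ⟨c, rfl⟩
        show inner ℂ (∑ k, ∑ i, c k i • g k i : MvP N) Cq = 0
        rw [sum_inner]
        refine Finset.sum_eq_zero fun k _ => ?_
        rw [sum_inner]
        refine Finset.sum_eq_zero fun i _ => ?_
        rw [inner_smul_left, hinner, hinner_gen k i Cq, h k]
        simp
    obtain ⟨L, hLK, Cc, hCperp, hPLC⟩ := K.exists_add_mem_mem_orthogonal P
    have hCc_hom : Cc.IsHomogeneous ((t + 1) * s) := by
      have : Cc = P - L := by rw [hPLC]; ring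
      rw [this]
      exact hP.sub (hK_hom L hLK)
    have hΦrep : ∀ c : Fin N → Fin N → ℂ,
        (∑ k, ∑ i, c k i • g k i : MvP N) =
          (∑ k, (∑ i, MvPolynomial.C (c k i) * X i) * pderiv k Δ) * Δ ^ t := by
      intro c
      rw [Finset.sum_mul]
      refine Finset.sum_congr rfl fun k _ => ?_
      rw [Finset.sum_mul, Finset.sum_mul]
      refine Finset.sum_congr rfl fun i _ => ?_
      rw [MvPolynomial.smul_eq_C_mul, hg]
      ring
    obtain ⟨c, hc⟩ := id hLK
    have hLrep : L = (∑ k, (∑ i, MvPolynomial.C (c k i) * X i) * pderiv k Δ) * Δ ^ t := by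
      rw [← hc]
      exact hΦrep c
    have hfishCc : ∀ k, fisher (pderiv k Δ * Δ ^ t) Cc = 0 :=
      (memKperp Cc hCc_hom).mp hCperp
    refine ⟨(L, Cc), ⟨⟨fun k => ∑ i, MvPolynomial.C (c k i) * X i,
      fun k => MvPolynomial.IsHomogeneous.sum _ _ _
        (fun i _ => MvPolynomial.isHomogeneous_C_mul_X _ _), hLrep⟩, hPLC, hfishCc⟩, ?_⟩
    rintro ⟨L', C'⟩ ⟨⟨A', hA'h, hA'⟩, hP', hfish'⟩
    dsimp only at hA' hP' hfish'
    have hL'K : L' ∈ K := by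
      refine ⟨fun k i => coeff (Finsupp.single i 1) (A' k), ?_⟩
      show (∑ k, ∑ i, coeff (Finsupp.single i 1) (A' k) • g k i : MvP N) = L'
      rw [hΦrep, hA']
      congr 1
      refine Finset.sum_congr rfl fun k _ => ?_
      congr 1
      exact (repr_degree_one (A' k) (hA'h k)).symm
    have hC'hom : C'.IsHomogeneous ((t + 1) * s) := by
      have : C' = P - L' := by rw [hP']; ring
      rw [this]
      exact hP.sub (hK_hom L' hL'K)
    have hC'perp : C' ∈ Kᗮ := (memKperp C' hC'hom).mpr hfish'
    have hsum : L + Cc = L' + C' := by rw [← hPLC, ← hP']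
    have hdiff : L - L' = C' - Cc := by linear_combination hsum
    have hdiffK : L - L' ∈ K := sub_mem hLK hL'K
    have hdiffperp : L - L' ∈ Kᗮ := hdiff ▸ sub_mem hC'perp hCperp
    have hzero : L - L' = 0 := by
      have := (K.orthogonal_disjoint).le_bot (Submodule.mem_inf.mpr ⟨hdiffK, hdiffperp⟩)
      simpa using this
    have hLL' : L' = L := by
      have := sub_eq_zero.mp hzero
      exact this.symm
    have hCC' : C' = Cc := by
      have h1 : L + Cc = L + C' := by rw [hsum, hLL']
      exact (add_left_cancel h1).symm
    rw [hLL', hCC']
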